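/- In the Unary Bin Packing reduction instance with b ≥ 2 bins, in any k-equitable set of schedules with k = B·(b³ − b + 1), every item client must be scheduled before the bin client x on day x₂ for at least one bin x. -/
import Mathlib


def Cg {α : Type} [DecidableEq α] [Fintype α] {M : ℕ} (pos : α ≃ Fin M)
    (p : α → ℕ) (c : α) : ℕ :=
  ∑ c' ∈ Finset.univ.filter (fun c' => pos c' ≤ pos c), p c'

def pBin (I b B : ℕ) (s : Fin I → ℕ) : (Fin b × Bool) → (Fin I ⊕ Fin b) → ℕ :=
  fun d c =>
    match d, c with
    | (x, false), Sum.inr x' => if x' = x then B * (b ^ 3 - b ^ 2 - b) else 0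
    | (x, true), Sum.inr x' => if x' = x then B * b ^ 2 else 0
    | (_, true), Sum.inl j => s j
    | (_, false), Sum.inl _ => 0

theorem stmt13 (I b B : ℕ) (hb : 2 ≤ b) (s : Fin I → ℕ)
    (hsum : ∑ j, s j ≤ b * B) (hpos : ∀ j, 1 ≤ s j)
    (σ : (Fin b × Bool) → ((Fin I ⊕ Fin b) ≃ Fin (I + b)))
    (heq : ∀ c, ∑ i, Cg (σ i) (pBin I b B s i) c ≤ B * (b ^ 3 - b + 1)) :
    ∀ j : Fin I, ∃ x : Fin b,
      (σ (x, true)) (Sum.inl j) < (σ (x, true)) (Sum.inr x) := by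
  intro j
  by_contra h
  push_neg at h
  have key : ∀ x : Fin b,
      B * b ^ 2 + s j ≤ Cg (σ (x, true)) (pBin I b B s (x, true)) (Sum.inl j) := by
    intro x
    have hx : (σ (x, true)) (Sum.inr x) ≤ (σ (x, true)) (Sum.inl j) := h x
    have hsub : ({Sum.inr x, Sum.inl j} : Finset (Fin I ⊕ Fin b)) ⊆
        Finset.univ.filter (fun c' => (σ (x, true)) c' ≤ (σ (x, true)) (Sum.inl j)) := by
      intro c hc
      simp only [Finset.mem_insert, Finset.mem_singleton] at hc
      rcases hc with rfl | rfl <;> simp [hx]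
    calc B * b ^ 2 + s j
        = ∑ c ∈ ({Sum.inr x, Sum.inl j} : Finset (Fin I ⊕ Fin b)),
            pBin I b B s (x, true) c := by
          rw [Finset.sum_pair (by simp)]
          simp [pBin]
      _ ≤ _ := Finset.sum_le_sum_of_subset hsub
  have htot : ∑ _x : Fin b, (B * b ^ 2 + s j) ≤
      ∑ i, Cg (σ i) (pBin I b B s i) (Sum.inl j) := by
    calc ∑ x : Fin b, (B * b ^ 2 + s j)
        ≤ ∑ x : Fin b, Cg (σ (x, true)) (pBin I b B s (x, true)) (Sum.inl j) :=
          Finset.sum_le_sum fun x _ => key x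
      _ = ∑ i ∈ Finset.univ.image (fun x : Fin b => (x, true)),
            Cg (σ i) (pBin I b B s i) (Sum.inl j) := by
          rw [Finset.sum_image (by intro a _ c _ hac; simpa using hac)]
      _ ≤ _ := Finset.sum_le_sum_of_subset (Finset.subset_univ _)
  have hfin : b * (B * b ^ 2 + s j) ≤ B * (b ^ 3 - b + 1) := by
    simpa [Finset.sum_const, Finset.card_univ, mul_comm] using htot.trans (heq (Sum.inl j))
  have hle : b ^ 3 - b + 1 ≤ b ^ 3 := by
    have : b ≤ b ^ 3 := Nat.le_self_pow (by norm_num) b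
    omega
  have h2 : B * (b ^ 3 - b + 1) ≤ B * b ^ 3 := Nat.mul_le_mul_left B hle
  have h3 : b * (B * b ^ 2) = B * b ^ 3 := by ring
  have h4 : b * 1 ≤ b * s j := Nat.mul_le_mul_left b (hpos j)
  have h5 : b * (B * b ^ 2) + b * s j ≤ B * b ^ 3 := by
    rw [← Nat.mul_add]; exact hfin.trans h2
  omega
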